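/- arXiv:1812.02641 — 3 statements merged into one kernel-verified Lean document; each statement's English description precedes it below -/
import Mathlib

section
/- Let G=(V,E) be a finite tree and {i,j}∈E with components G_{i∖j} and G_{j∖i} after removing {i,j}. For a Gibbs distribution with potentials {Φ_k} and {Ψ_{kl}}, the belief Z_i(x_i) = Φ_i(x_i) Σ_{x_{V∖i}} ∏_{{k,l}∈E} Ψ_{kl}(x_k,x_l) ∏_{k≠i} Φ_k(x_k) factors as Z_i(x_i) = Z_i^{i∖j}(x_i) · Σ_{x_j} Ψ_{ji}(x_j,x_i) Z_j^{j∖i}(x_j), where Z_i^{i∖j} and Z_j^{j∖i} are the beliefs at i and j computed with respect to the induced Gibbs distributions on G_{i∖j} and G_{j∖i}. -/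
open scoped Classical

/-- The product of edge potentials `Ψ k l (x k) (x l)` over the edges `{k,l}` of `G`
both of whose endpoints lie in the vertex set `C` (each unordered edge is represented
once, by the ordered pair with `k < l`). -/
noncomputable def edgeProd {V 𝒳 : Type} [Fintype V] [LinearOrder V]
    (G : SimpleGraph V) (C : Set V) (Ψ : V → V → 𝒳 → 𝒳 → ℝ) (x : V → 𝒳) : ℝ :=
  ∏ p ∈ Finset.univ.filter
      (fun p : V × V => G.Adj p.1 p.2 ∧ p.1 < p.2 ∧ p.1 ∈ C ∧ p.2 ∈ C),
    Ψ p.1 p.2 (x p.1) (x p.2)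

/-- The belief at node `i` with respect to the Gibbs distribution induced on the
subgraph of `G` spanned by the vertex set `C`:
`Z_i^C(x_i) = Φ_i(x_i) * Σ_{x_{C∖i}} ∏_{{k,l}∈E(C)} Ψ_{kl}(x_k,x_l) ∏_{k∈C,k≠i} Φ_k(x_k)`.
Configurations are represented as functions `x : V → 𝒳` frozen to a default value `x0`
outside of `C`, so that the sum ranges exactly over configurations on `C` with `x i = xi`. -/
noncomputable def belief {V 𝒳 : Type} [Fintype V] [LinearOrder V] [Fintype 𝒳]
    (G : SimpleGraph V) (C : Set V) (Φ : V → 𝒳 → ℝ) (Ψ : V → V → 𝒳 → 𝒳 → ℝ)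
    (x0 : 𝒳) (i : V) (xi : 𝒳) : ℝ :=
  Φ i xi *
    ∑ x ∈ Finset.univ.filter
        (fun x : V → 𝒳 => x i = xi ∧ ∀ v, v ∉ C → x v = x0),
      edgeProd G C Ψ x *
        ∏ v ∈ Finset.univ.filter (fun v => v ∈ C ∧ v ≠ i), Φ v (x v)

/-- The component `G_{a∖b}` of `G` with the edge `{a,b}` removed that contains `a`. -/
def compSet {V : Type} (G : SimpleGraph V) (a b : V) : Set V :=
  {w | (G.deleteEdges {s(a, b)}).Reachable a w}

/-- The Belief Propagation message from `j` to `i`: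
`m_{j→i}(x_i) = Σ_{x_j} Ψ_{ji}(x_j, x_i) Z_j^{j∖i}(x_j)`, where `Z_j^{j∖i}` is the belief
at `j` on the component of `G ∖ {i,j}` containing `j`. -/
noncomputable def msg {V 𝒳 : Type} [Fintype V] [LinearOrder V] [Fintype 𝒳]
    (G : SimpleGraph V) (Φ : V → 𝒳 → ℝ) (Ψ : V → V → 𝒳 → 𝒳 → ℝ)
    (x0 : 𝒳) (j i : V) (xi : 𝒳) : ℝ :=
  ∑ xj : 𝒳, Ψ j i xj xi * belief G (compSet G j i) Φ Ψ x0 j xj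

lemma compSet_graph_comm {V : Type} (G : SimpleGraph V) (a b : V) :
    G.deleteEdges {s(b, a)} = G.deleteEdges {s(a, b)} := by
  rw [Sym2.eq_swap]

lemma compSet_self {V : Type} (G : SimpleGraph V) (a b : V) : a ∈ compSet G a b :=
  SimpleGraph.Reachable.refl a

lemma compSet_cover_aux {V : Type} {G : SimpleGraph V} {a b : V}
    {u w : V} (p : G.Walk u w)
    (hu : u ∈ compSet G a b ∨ u ∈ compSet G b a) :
    w ∈ compSet G a b ∨ w ∈ compSet G b a := by
  induction p with
  | nil => exact hu
  | @cons u c w h p ih =>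
    apply ih
    by_cases he : s(u, c) = s(a, b)
    · rw [Sym2.eq_iff] at he
      rcases he with ⟨rfl, rfl⟩ | ⟨rfl, rfl⟩
      · exact Or.inr (SimpleGraph.Reachable.refl _)
      · exact Or.inl (SimpleGraph.Reachable.refl _)
    · have hadj : (G.deleteEdges {s(a, b)}).Adj u c := by
        simp [SimpleGraph.deleteEdges_adj, h, he]
      rcases hu with hu | hu
      · exact Or.inl (hu.trans hadj.reachable)
      · refine Or.inr (hu.trans ?_)
        rw [compSet_graph_comm]
        exact hadj.reachable

lemma compSet_cover {V : Type} {G : SimpleGraph V} (hconn : G.Connected)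
    (a b w : V) : w ∈ compSet G a b ∨ w ∈ compSet G b a := by
  obtain ⟨p⟩ := hconn a w
  exact compSet_cover_aux p (Or.inl (compSet_self G a b))

lemma compSet_disjoint {V : Type} {G : SimpleGraph V} (hacyc : G.IsAcyclic)
    {a b : V} (hab : G.Adj a b) {w : V}
    (h1 : w ∈ compSet G a b) (h2 : w ∈ compSet G b a) : False := by
  have hbr := (SimpleGraph.isAcyclic_iff_forall_edge_isBridge.mp hacyc)
    (G.mem_edgeSet.mpr hab)
  rw [SimpleGraph.isBridge_iff] at hbr
  apply hbr
  have h2' : (G.deleteEdges {s(a, b)}).Reachable b w := by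
    rw [← compSet_graph_comm]; exact h2
  exact h1.trans h2'.symm

lemma adj_compSet {V : Type} {G : SimpleGraph V} (hconn : G.Connected)
    {a b k l : V} (hkl : G.Adj k l) (hne : s(k, l) ≠ s(a, b)) :
    (k ∈ compSet G a b ∧ l ∈ compSet G a b) ∨
    (k ∈ compSet G b a ∧ l ∈ compSet G b a) := by
  have hadj : (G.deleteEdges {s(a, b)}).Adj k l := by
    simp [SimpleGraph.deleteEdges_adj, hkl, hne]
  rcases compSet_cover hconn a b k with hk | hk
  · exact Or.inl ⟨hk, hk.trans hadj.reachable⟩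
  · refine Or.inr ⟨hk, hk.trans ?_⟩
    rw [compSet_graph_comm]
    exact hadj.reachable

/-- In a finite tree `G` with edge `{i,j}`, the belief
`Z_i(x_i)` (computed on all of `G`) factors as
`Z_i(x_i) = Z_i^{i∖j}(x_i) · Σ_{x_j} Ψ_{ji}(x_j, x_i) Z_j^{j∖i}(x_j)`,
where `Z_i^{i∖j}` and `Z_j^{j∖i}` are the beliefs on the two components of
`G ∖ {i,j}`. -/
theorem belief_factorization
    {V 𝒳 : Type} [Fintype V] [LinearOrder V] [Fintype 𝒳]
    (G : SimpleGraph V) (hconn : G.Connected) (hacyc : G.IsAcyclic)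
    (Φ : V → 𝒳 → ℝ) (Ψ : V → V → 𝒳 → 𝒳 → ℝ)
    (hΦ : ∀ k a, 0 < Φ k a) (hΨ : ∀ k l a b, 0 < Ψ k l a b)
    (hΨsymm : ∀ k l a b, Ψ k l a b = Ψ l k b a)
    (x0 : 𝒳) (i j : V) (hij : G.Adj i j) (xi : 𝒳) :
    belief G Set.univ Φ Ψ x0 i xi
      = belief G (compSet G i j) Φ Ψ x0 i xi *
          ∑ xj : 𝒳, Ψ j i xj xi * belief G (compSet G j i) Φ Ψ x0 j xj := by
  classical
  set A := compSet G i j with hA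
  set B := compSet G j i with hB
  have hiA : i ∈ A := compSet_self G i j
  have hjB : j ∈ B := compSet_self G j i
  have hdis : ∀ w, w ∈ A → w ∈ B → False :=
    fun w h1 h2 => compSet_disjoint hacyc hij h1 h2
  have hcov : ∀ w, w ∈ A ∨ w ∈ B := fun w => compSet_cover hconn i j w
  have hjA : j ∉ A := fun h => hdis j h hjB
  have hiB : i ∉ B := fun h => hdis i hiA h
  have hne : i ≠ j := hij.ne
  -- the sorted version of the edge (i, j)
  set q : V × V := if i < j then (i, j) else (j, i) with hq
  have hq1 : G.Adj q.1 q.2 ∧ q.1 < q.2 := by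
    rcases lt_or_gt_of_ne hne with h | h
    · simp [hq, h, hij]
    · simp [hq, not_lt.mpr h.le, h, hij.symm]
  have hqij : (q = (i, j) ∧ i < j) ∨ (q = (j, i) ∧ j < i) := by
    rcases lt_or_gt_of_ne hne with h | h
    · exact Or.inl ⟨by simp [hq, h], h⟩
    · exact Or.inr ⟨by simp [hq, not_lt.mpr h.le], h⟩
  -- edge pair sets
  set PA := Finset.univ.filter
      (fun p : V × V => G.Adj p.1 p.2 ∧ p.1 < p.2 ∧ p.1 ∈ A ∧ p.2 ∈ A) with hPA
  set PB := Finset.univ.filter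
      (fun p : V × V => G.Adj p.1 p.2 ∧ p.1 < p.2 ∧ p.1 ∈ B ∧ p.2 ∈ B) with hPB
  have hqPAB : q ∉ PA ∪ PB := by
    rcases hqij with ⟨hq', _⟩ | ⟨hq', _⟩ <;>
      simp only [hq', hPA, hPB, Finset.mem_union, Finset.mem_filter, Finset.mem_univ,
        true_and, not_or] <;> constructor <;> rintro ⟨-, -, h1, h2⟩
    · exact hjA h2
    · exact hiB h1
    · exact hjA h1
    · exact hiB h2
  have hdisP : Disjoint PA PB := by
    rw [Finset.disjoint_left]
    rintro p hp hp'
    simp only [hPA, hPB, Finset.mem_filter] at hp hp'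
    exact hdis p.1 hp.2.2.2.1 hp'.2.2.2.1
  have hPsplit : Finset.univ.filter
      (fun p : V × V => G.Adj p.1 p.2 ∧ p.1 < p.2) = insert q (PA ∪ PB) := by
    ext p
    simp only [hPA, hPB, Finset.mem_filter, Finset.mem_univ, true_and,
      Finset.mem_insert, Finset.mem_union]
    constructor
    · rintro ⟨hadj, hlt⟩
      by_cases he : s(p.1, p.2) = s(i, j)
      · left
        rw [Sym2.eq_iff] at he
        rcases he with ⟨h1, h2⟩ | ⟨h1, h2⟩
        · rcases hqij with ⟨hq', _⟩ | ⟨hq', hlt'⟩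
          · rw [hq']; exact Prod.ext h1 h2
          · exfalso; rw [h1, h2] at hlt; exact absurd hlt (not_lt.mpr hlt'.le)
        · rcases hqij with ⟨hq', hlt'⟩ | ⟨hq', _⟩
          · exfalso; rw [h1, h2] at hlt; exact absurd hlt (not_lt.mpr hlt'.le)
          · rw [hq']; exact Prod.ext h1 h2
      · right
        rcases adj_compSet hconn hadj he with ⟨h1, h2⟩ | ⟨h1, h2⟩
        · exact Or.inl ⟨hadj, hlt, h1, h2⟩
        · exact Or.inr ⟨hadj, hlt, h1, h2⟩
    · rintro (rfl | ⟨h, h', -⟩ | ⟨h, h', -⟩)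
      · exact hq1
      · exact ⟨h, h'⟩
      · exact ⟨h, h'⟩
  -- vertex sets
  set QA := Finset.univ.filter (fun v => v ∈ A ∧ v ≠ i) with hQA
  set QB := Finset.univ.filter (fun v => v ∈ B ∧ v ≠ j) with hQB
  have hjQAB : j ∉ QA ∪ QB := by
    simp only [hQA, hQB, Finset.mem_union, Finset.mem_filter, Finset.mem_univ, true_and,
      not_or]
    exact ⟨fun h => hjA h.1, fun h => h.2 rfl⟩
  have hdisQ : Disjoint QA QB := by
    rw [Finset.disjoint_left]
    rintro v hv hv'
    simp only [hQA, hQB, Finset.mem_filter] at hv hv'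
    exact hdis v hv.2.1 hv'.2.1
  have hQsplit : Finset.univ.filter (fun v => v ≠ i)
      = insert j (QA ∪ QB) := by
    ext v
    simp only [hQA, hQB, Finset.mem_filter, Finset.mem_univ, true_and,
      Finset.mem_insert, Finset.mem_union]
    constructor
    · intro hvi
      rcases hcov v with hv | hv
      · exact Or.inr (Or.inl ⟨hv, hvi⟩)
      · by_cases hvj : v = j
        · exact Or.inl hvj
        · exact Or.inr (Or.inr ⟨hv, hvj⟩)
    · rintro (rfl | ⟨-, hvi⟩ | ⟨hv, -⟩)
      · exact fun h => hne h.symm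
      · exact hvi
      · exact fun h => hiB (h ▸ hv)
  -- frozen projections
  set πA : (V → 𝒳) → (V → 𝒳) := fun x v => if v ∈ A then x v else x0 with hπA
  set πB : (V → 𝒳) → (V → 𝒳) := fun x v => if v ∈ B then x v else x0 with hπB
  set T := Finset.univ.filter (fun z : V → 𝒳 => ∀ v, v ∉ B → z v = x0) with hT
  set fB : (V → 𝒳) → ℝ := fun z =>
    Ψ j i (z j) xi * Φ j (z j) * (edgeProd G B Ψ z * ∏ v ∈ QB, Φ v (z v)) with hfB
  -- rewrite the message sum as one sum over T
  have hmsg : (∑ xj : 𝒳, Ψ j i xj xi * belief G B Φ Ψ x0 j xj) = ∑ z ∈ T, fB z := by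
    have hmaps : ∀ z ∈ T, z j ∈ (Finset.univ : Finset 𝒳) := fun _ _ => Finset.mem_univ _
    rw [← Finset.sum_fiberwise_of_maps_to hmaps fB]
    refine Finset.sum_congr rfl fun xj _ => ?_
    have hset : Finset.univ.filter
        (fun z : V → 𝒳 => z j = xj ∧ ∀ v, v ∉ B → z v = x0)
        = T.filter (fun z => z j = xj) := by
      ext z
      simp only [hT, Finset.mem_filter, Finset.mem_univ, true_and]
      tauto
    rw [belief, hset, Finset.mul_sum, Finset.mul_sum]
    refine Finset.sum_congr rfl fun z hz => ?_
    simp only [Finset.mem_filter] at hz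
    simp only [hfB, hQB, hz.2]
    ring
  rw [hmsg, belief, belief, mul_assoc]
  congr 1
  simp only [Set.mem_univ, not_true_eq_false, false_implies, implies_true, forall_const,
    and_true, true_and]
  rw [Finset.sum_mul_sum, ← Finset.sum_product']
  refine Finset.sum_nbij' (fun x => (πA x, πB x))
    (fun p v => if v ∈ A then p.1 v else p.2 v) ?_ ?_ ?_ ?_ ?_
  · intro x hx
    simp only [Finset.mem_filter, Finset.mem_univ, true_and] at hx
    simp only [hT, Finset.mem_product, Finset.mem_filter, Finset.mem_univ, true_and]
    refine ⟨⟨?_, fun v hv => if_neg hv⟩, fun v hv => if_neg hv⟩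
    simp only [hπA, if_pos hiA]
    exact hx
  · intro p hp
    simp only [hT, Finset.mem_product, Finset.mem_filter, Finset.mem_univ,
      true_and] at hp
    simp only [Finset.mem_filter, Finset.mem_univ, true_and]
    simp only [if_pos hiA]
    exact hp.1.1
  · intro x hx
    funext v
    by_cases hv : v ∈ A
    · simp only [hπA, hπB, if_pos hv]
    · rcases hcov v with h | h
      · exact absurd h hv
      · simp only [hπA, hπB, if_neg hv, if_pos h]
  · intro p hp
    simp only [hT, Finset.mem_product, Finset.mem_filter, Finset.mem_univ,
      true_and] at hp
    refine Prod.ext (funext fun v => ?_) (funext fun v => ?_)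
    · by_cases hv : v ∈ A
      · simp only [hπA, if_pos hv]
      · simp only [hπA, if_neg hv]
        exact (hp.1.2 v hv).symm
    · by_cases hv : v ∈ B
      · have hv' : v ∉ A := fun h => hdis v h hv
        simp only [hπB, if_pos hv, if_neg hv']
      · simp only [hπB, if_neg hv]
        exact (hp.2 v hv).symm
  · intro x hx
    simp only [Finset.mem_filter, Finset.mem_univ, true_and] at hx
    have hxj : πB x j = x j := by simp only [hπB, if_pos hjB]
    have heAcongr : edgeProd G A Ψ (πA x) = edgeProd G A Ψ x := by
      rw [edgeProd, edgeProd]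
      refine Finset.prod_congr rfl fun p hp => ?_
      simp only [Finset.mem_filter] at hp
      simp only [hπA, if_pos hp.2.2.2.1, if_pos hp.2.2.2.2]
    have heBcongr : edgeProd G B Ψ (πB x) = edgeProd G B Ψ x := by
      rw [edgeProd, edgeProd]
      refine Finset.prod_congr rfl fun p hp => ?_
      simp only [Finset.mem_filter] at hp
      simp only [hπB, if_pos hp.2.2.2.1, if_pos hp.2.2.2.2]
    have hQAcongr : (∏ v ∈ QA, Φ v (πA x v)) = ∏ v ∈ QA, Φ v (x v) := by
      refine Finset.prod_congr rfl fun v hv => ?_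
      simp only [hQA, Finset.mem_filter] at hv
      simp only [hπA, if_pos hv.2.1]
    have hQBcongr : (∏ v ∈ QB, Φ v (πB x v)) = ∏ v ∈ QB, Φ v (x v) := by
      refine Finset.prod_congr rfl fun v hv => ?_
      simp only [hQB, Finset.mem_filter] at hv
      simp only [hπB, if_pos hv.2.1]
    have hEsplit : edgeProd G Set.univ Ψ x
        = Ψ q.1 q.2 (x q.1) (x q.2) * (edgeProd G A Ψ x * edgeProd G B Ψ x) := by
      simp only [edgeProd, Set.mem_univ, and_true]
      rw [hPsplit, Finset.prod_insert hqPAB, Finset.prod_union hdisP]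
    have hΨq : Ψ q.1 q.2 (x q.1) (x q.2) = Ψ j i (x j) xi := by
      rcases hqij with ⟨hq', _⟩ | ⟨hq', _⟩ <;> rw [hq']
      · show Ψ i j (x i) (x j) = Ψ j i (x j) xi
        rw [hx]
        exact hΨsymm i j xi (x j)
      · show Ψ j i (x j) (x i) = Ψ j i (x j) xi
        rw [hx]
    have hΦsplit : (∏ v ∈ Finset.univ.filter (fun v => v ≠ i), Φ v (x v))
        = Φ j (x j) * ((∏ v ∈ QA, Φ v (x v)) * ∏ v ∈ QB, Φ v (x v)) := by
      rw [hQsplit, Finset.prod_insert hjQAB, Finset.prod_union hdisQ]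
    rw [hEsplit, hΨq, hΦsplit]
    simp only [hfB, heAcongr, heBcongr, hQAcongr, hQBcongr, hxj]
    have e : ∀ s : Finset V, s = QA → (∏ v ∈ s, Φ v (πA x v)) = ∏ v ∈ QA, Φ v (x v) :=
      fun s hs => hs ▸ hQAcongr
    rw [e]
    · ring
    · ext v; simp [hQA]
end

section
/- Let T be the associated tree for loop cutset L and edge {i,j}∈E(T). If l ∈ L_{i∖j} (all copies of l lie in T_{i∖j}), then for any two loop cutset configurations x_L and x'_L differing only in the value at l, the conditioned messages m_{j→i}^{(x_L)} and m_{j→i}^{(x'_L)} are equal. -/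
open scoped Classical

/-! ### Local Conditioning on an associated tree

`T` is the associated tree (on vertex type `W`) for the loop cutset `L ⊆ V` of an
original graph; `π : W → V` sends each tree node to the original node it is a copy of. -/

/-- Self potentials conditioned on the configuration `x` at (copies of) the nodes of
`S`: the self potential of each copy `w` with `π w ∈ S` is multiplied by the indicator
`δ^{(x (π w))}`. -/
noncomputable def condPhi {W V 𝒳 : Type} (π : W → V) (Φ : W → 𝒳 → ℝ)
    (S : Finset V) (x : V → 𝒳) : W → 𝒳 → ℝ :=
  fun w a => if π w ∈ S then (if a = x (π w) then Φ w a else 0) else Φ w a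

/-- The BP message from `j` to `i` on the associated tree `T`, conditioned (via
indicator-modified self potentials) on the configuration `x` at the nodes of `S`. -/
noncomputable def condMsg {W V 𝒳 : Type} [Fintype W] [LinearOrder W] [Fintype 𝒳]
    (T : SimpleGraph W) (π : W → V) (Φ : W → 𝒳 → ℝ) (Ψ : W → W → 𝒳 → 𝒳 → ℝ)
    (x0 : 𝒳) (S : Finset V) (x : V → 𝒳) (j i : W) (xi : 𝒳) : ℝ :=
  msg T (condPhi π Φ S x) Ψ x0 j i xi

/-- `Lside T π L a b` is `L_{a∖b}`: the loop cutset nodes *all of whose copies* lie in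
the component `T_{a∖b}` of `T` minus the edge `{a,b}` containing `a`. -/
noncomputable def Lside {W V : Type} (T : SimpleGraph W) (π : W → V)
    (L : Finset V) (a b : W) : Finset V :=
  L.filter (fun l => ∀ w : W, π w = l → w ∈ compSet T a b)

/-- `Rset T π L a b` is the relevant set `R_{ab} = L ∖ (L_{a∖b} ∪ L_{b∖a})` of the edge
`{a,b}` of the associated tree. -/
noncomputable def Rset {W V : Type} [DecidableEq V] (T : SimpleGraph W) (π : W → V)
    (L : Finset V) (a b : W) : Finset V :=
  L \ (Lside T π L a b ∪ Lside T π L b a)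

/-- Overwrite the configuration `x : V → 𝒳` by the configuration `y` on `S`. -/
def patch {V 𝒳 : Type} [DecidableEq V] (x : V → 𝒳) (S : Finset V) (y : {v // v ∈ S} → 𝒳) : V → 𝒳 :=
  fun v => if h : v ∈ S then y ⟨v, h⟩ else x v

/-- The reduced message `m_{j→i}^{(x_{R_{ji}})}`: the sum of the fully conditioned
messages over all configurations of the upstream loop cutset nodes `L_{j∖i}` (the
remaining conditioning values being given by `x`). -/
noncomputable def redMsg {W V 𝒳 : Type} [Fintype W] [LinearOrder W] [Fintype 𝒳]
    (T : SimpleGraph W) (π : W → V) (L : Finset V)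
    (Φ : W → 𝒳 → ℝ) (Ψ : W → W → 𝒳 → 𝒳 → ℝ) (x0 : 𝒳)
    (j i : W) (x : V → 𝒳) (xi : 𝒳) : ℝ :=
  ∑ y : {v // v ∈ Lside T π L j i} → 𝒳,
    condMsg T π Φ Ψ x0 L (patch x (Lside T π L j i) y) j i xi

/-- Let `T` be the associated tree for loop cutset `L` (with
projection `π` onto original nodes) and `{i,j}` an edge of `T`.  If `l ∈ L_{i∖j}` (all
copies of `l` lie in `T_{i∖j}`), then for any two loop cutset configurations differing
only in the value at `l`, the conditioned messages from `j` to `i` are equal. -/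
theorem condMsg_independent_of_downstream_cutset_value
    {W V 𝒳 : Type} [Fintype W] [LinearOrder W] [Fintype V] [DecidableEq V] [Fintype 𝒳]
    (T : SimpleGraph W) (hconn : T.Connected) (hacyc : T.IsAcyclic)
    (π : W → V) (L : Finset V)
    (Φ : W → 𝒳 → ℝ) (Ψ : W → W → 𝒳 → 𝒳 → ℝ) (x0 : 𝒳)
    (i j : W) (hij : T.Adj i j)
    (l : V) (hl : l ∈ L)
    (hdown : ∀ w : W, π w = l → w ∈ compSet T i j)
    (x x' : V → 𝒳) (hagree : ∀ l' ∈ L, l' ≠ l → x l' = x' l') (xi : 𝒳) :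
    condMsg T π Φ Ψ x0 L x j i xi = condMsg T π Φ Ψ x0 L x' j i xi := by
  have hbr : T.IsBridge s(i, j) :=
    (SimpleGraph.isAcyclic_iff_forall_adj_isBridge.mp hacyc) hij
  have hdisj : ∀ w : W, w ∈ compSet T j i → π w ≠ l := by
    intro w hw hpw
    have hw' : (T.deleteEdges {s(i, j)}).Reachable i w := hdown w hpw
    have hs : (s(j, i) : Sym2 W) = s(i, j) := Sym2.eq_swap
    have hw2 : (T.deleteEdges {s(i, j)}).Reachable j w := by
      have := hw
      simpa [compSet, hs] using this
    exact hbr (hw'.trans hw2.symm)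
  have hPhi : ∀ w : W, w ∈ compSet T j i →
      condPhi π Φ L x w = condPhi π Φ L x' w := by
    intro w hw
    funext a
    unfold condPhi
    by_cases h : π w ∈ L
    · simp [h, hagree (π w) h (hdisj w hw)]
    · simp [h]
  unfold condMsg msg belief
  refine Finset.sum_congr rfl ?_
  intro xj _
  have hjmem : j ∈ compSet T j i := SimpleGraph.Reachable.refl j
  rw [hPhi j hjmem]
  congr 1
  congr 1
  refine Finset.sum_congr rfl ?_
  intro xc _
  congr 1
  refine Finset.prod_congr rfl ?_
  intro v hv
  rw [hPhi v (Finset.mem_filter.mp hv).2.1]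
end

section
/- For a node i in the associated tree T with neighbors j_1,…,j_n, the loop cutset L is partitioned as the disjoint union of the relevant set R_i = ∪_m R_{i,j_m} and the sets L_{j_1∖i},…,L_{j_n∖i}. -/
open scoped Classical

section LCAux
open SimpleGraph

private lemma not_reach_del {W : Type} {T : SimpleGraph W} (hacyc : T.IsAcyclic)
    {i j : W} (hadj : T.Adj i j) :
    ¬ (T.deleteEdges {s(i, j)}).Reachable i j := by
  have hb := (SimpleGraph.isAcyclic_iff_forall_adj_isBridge.mp hacyc) hadj
  rw [SimpleGraph.isBridge_iff] at hb
  exact hb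


private lemma exists_path_of_branch {W : Type} {T : SimpleGraph W} (hacyc : T.IsAcyclic)
    {i j w : W} (hadj : T.Adj i j) (hw : w ∈ compSet T j i) :
    ∃ p : T.Walk i w, p.IsPath ∧ p.getVert 1 = j ∧ s(i, j) ∈ p.edges := by
  classical
  obtain ⟨q0⟩ := hw
  obtain ⟨q, hqp⟩ := q0.toPath
  have hsub : ∀ e ∈ q.edges, e ∈ T.edgeSet := by
    intro e he
    have := q.edges_subset_edgeSet he
    rw [SimpleGraph.edgeSet_deleteEdges] at this
    exact this.1
  have hi : i ∉ q.support := by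
    intro hi
    exact not_reach_del hacyc hadj.symm ⟨q.takeUntil i hi⟩
  refine ⟨SimpleGraph.Walk.cons hadj (q.transfer T hsub), ?_, ?_, ?_⟩
  · exact (hqp.transfer hsub).cons (by rwa [SimpleGraph.Walk.support_transfer])
  · rw [SimpleGraph.Walk.getVert_cons_succ, SimpleGraph.Walk.getVert_zero]
  · simp

private lemma exists_path_no_edge {W : Type} {T : SimpleGraph W}
    {i j w : W} (hw : w ∈ compSet T i j) :
    ∃ p : T.Walk i w, p.IsPath ∧ s(i, j) ∉ p.edges := by
  obtain ⟨q0⟩ := hw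
  obtain ⟨q, hqp⟩ := q0.toPath
  have hsub : ∀ e ∈ q.edges, e ∈ T.edgeSet := by
    intro e he
    have := q.edges_subset_edgeSet he
    rw [SimpleGraph.edgeSet_deleteEdges] at this
    exact this.1
  refine ⟨q.transfer T hsub, hqp.transfer hsub, ?_⟩
  rw [SimpleGraph.Walk.edges_transfer]
  intro he
  have := q.edges_subset_edgeSet he
  rw [SimpleGraph.edgeSet_deleteEdges] at this
  exact this.2 rfl

private lemma compSet_disjoint_s13 {W : Type} {T : SimpleGraph W} (hacyc : T.IsAcyclic)
    {i j w : W} (hadj : T.Adj i j)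
    (h1 : w ∈ compSet T i j) (h2 : w ∈ compSet T j i) : False := by
  obtain ⟨p1, hp1, hne⟩ := exists_path_no_edge h1
  obtain ⟨p2, hp2, -, he⟩ := exists_path_of_branch hacyc hadj h2
  have h12 : p1 = p2 := Subtype.ext_iff.mp (hacyc.path_unique ⟨p1, hp1⟩ ⟨p2, hp2⟩)
  rw [h12] at hne
  exact hne he

private lemma branch_eq {W : Type} {T : SimpleGraph W} (hacyc : T.IsAcyclic)
    {i j j' w : W} (hadj : T.Adj i j) (hadj' : T.Adj i j')
    (h : w ∈ compSet T j i) (h' : w ∈ compSet T j' i) : j = j' := by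
  obtain ⟨p, hp, hg, -⟩ := exists_path_of_branch hacyc hadj h
  obtain ⟨p', hp', hg', -⟩ := exists_path_of_branch hacyc hadj' h'
  have hpq : p = p' := Subtype.ext_iff.mp (hacyc.path_unique ⟨p, hp⟩ ⟨p', hp'⟩)
  rw [← hg, hpq, hg']

private lemma compSet_cover_s13 {W : Type} {T : SimpleGraph W} (hconn : T.Connected)
    {i j : W} (hadj : T.Adj i j) (w : W) :
    w ∈ compSet T i j ∨ w ∈ compSet T j i := by
  have hstep : ∀ {u v : W}, T.Adj u v → (u ∈ compSet T i j ∨ u ∈ compSet T j i) →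
      (v ∈ compSet T i j ∨ v ∈ compSet T j i) := by
    intro u v huv hu
    by_cases hc : s(u, v) = s(i, j)
    · rw [Sym2.eq_iff] at hc
      rcases hc with ⟨rfl, rfl⟩ | ⟨rfl, rfl⟩
      · exact Or.inr (SimpleGraph.Reachable.refl _)
      · exact Or.inl (SimpleGraph.Reachable.refl _)
    · rcases hu with hu | hu
      · refine Or.inl (hu.trans (SimpleGraph.Adj.reachable ?_))
        exact SimpleGraph.deleteEdges_adj.mpr ⟨huv, by simpa using hc⟩
      · refine Or.inr (hu.trans (SimpleGraph.Adj.reachable ?_))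
        refine SimpleGraph.deleteEdges_adj.mpr ⟨huv, ?_⟩
        intro hmem
        rw [Set.mem_singleton_iff] at hmem
        exact hc (hmem.trans Sym2.eq_swap)
  have haux : ∀ {u w : W} (_ : T.Walk u w),
      (u ∈ compSet T i j ∨ u ∈ compSet T j i) →
      (w ∈ compSet T i j ∨ w ∈ compSet T j i) := by
    intro u w p
    induction p with
    | nil => exact id
    | cons h q ih => intro hu; exact ih (hstep h hu)
  obtain ⟨p⟩ := hconn.preconnected i w
  exact haux p (Or.inl (SimpleGraph.Reachable.refl _))

private lemma exists_branch {W : Type} {T : SimpleGraph W} (hconn : T.Connected)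
    {i w : W} (hw : w ≠ i) :
    ∃ b, T.Adj i b ∧ w ∈ compSet T b i := by
  classical
  obtain ⟨p0⟩ := hconn.preconnected i w
  obtain ⟨p, hp⟩ := p0.toPath
  cases p with
  | nil => exact absurd rfl hw
  | @cons _ b _ h q =>
    rw [SimpleGraph.Walk.cons_isPath_iff] at hp
    refine ⟨b, h, ⟨q.transfer _ ?_⟩⟩
    intro e he
    rw [SimpleGraph.edgeSet_deleteEdges]
    refine ⟨q.edges_subset_edgeSet he, ?_⟩
    intro hmem
    rw [Set.mem_singleton_iff] at hmem
    rw [hmem] at he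
    exact hp.2 (q.snd_mem_support_of_mem_edges he)

/-- For a node `i` of the associated tree `T` (each loop cutset node
having been split into at least two copies), the loop cutset `L` is partitioned into
the disjoint union of the relevant set `R_i = ⋃_{j∈∂i} R_{i,j}` and the upstream sets
`L_{j∖i}`, `j ∈ ∂i`. -/
theorem cutset_partition_at_node
    {W V 𝒳 : Type} [Fintype W] [LinearOrder W] [Fintype V] [DecidableEq V]
    (T : SimpleGraph W) (hconn : T.Connected) (hacyc : T.IsAcyclic)
    (π : W → V) (L : Finset V)
    (hcopies : ∀ l ∈ L, ∃ w w' : W, w ≠ w' ∧ π w = l ∧ π w' = l)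
    (i : W) :
    L = (T.neighborFinset i).biUnion (fun j => Rset T π L i j) ∪
          (T.neighborFinset i).biUnion (fun j => Lside T π L j i) ∧
      (∀ j ∈ T.neighborFinset i,
        Disjoint ((T.neighborFinset i).biUnion (fun j' => Rset T π L i j'))
          (Lside T π L j i)) ∧
      (∀ j ∈ T.neighborFinset i, ∀ j' ∈ T.neighborFinset i, j ≠ j' →
        Disjoint (Lside T π L j i) (Lside T π L j' i)) := by
  classical
  have hN : ∀ j : W, j ∈ T.neighborFinset i ↔ T.Adj i j := fun j =>
    SimpleGraph.mem_neighborFinset T i j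
  refine ⟨?_, ?_, ?_⟩
  · apply Finset.ext
    intro l
    constructor
    · intro hl
      rw [Finset.mem_union]
      by_cases hcase : ∃ j ∈ T.neighborFinset i, l ∈ Lside T π L j i
      · exact Or.inr (Finset.mem_biUnion.mpr hcase)
      · push_neg at hcase
        left
        obtain ⟨w, w', hne, hw, hw'⟩ := hcopies l hl
        obtain ⟨w0, hw0l, hw0i⟩ : ∃ w0, π w0 = l ∧ w0 ≠ i := by
          by_cases h : w = i
          · exact ⟨w', hw', fun e => hne (h.trans e.symm)⟩
          · exact ⟨w, hw, h⟩
        obtain ⟨b, hb, hwb⟩ := exists_branch hconn hw0i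
        refine Finset.mem_biUnion.mpr ⟨b, (hN b).mpr hb, ?_⟩
        simp only [Rset, Finset.mem_sdiff, Finset.mem_union]
        refine ⟨hl, ?_⟩
        rintro (hmem | hmem)
        · simp only [Lside, Finset.mem_filter] at hmem
          exact compSet_disjoint_s13 hacyc hb (hmem.2 w0 hw0l) hwb
        · exact hcase b ((hN b).mpr hb) hmem
    · intro hl
      rw [Finset.mem_union] at hl
      rcases hl with hl | hl
      · obtain ⟨j, -, hj⟩ := Finset.mem_biUnion.mp hl
        simp only [Rset, Finset.mem_sdiff] at hj
        exact hj.1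
      · obtain ⟨j, -, hj⟩ := Finset.mem_biUnion.mp hl
        simp only [Lside, Finset.mem_filter] at hj
        exact hj.1
  · intro j hj
    rw [Finset.disjoint_left]
    intro l hlR hlL
    obtain ⟨j', hj', hjR⟩ := Finset.mem_biUnion.mp hlR
    simp only [Rset, Finset.mem_sdiff, Finset.mem_union] at hjR
    have hadj : T.Adj i j := (hN j).mp hj
    have hadj' : T.Adj i j' := (hN j').mp hj'
    by_cases hjj : j = j'
    · subst hjj
      exact hjR.2 (Or.inr hlL)
    · apply hjR.2
      left
      simp only [Lside, Finset.mem_filter] at hlL ⊢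
      refine ⟨hlL.1, fun w hwl => ?_⟩
      have hwj : w ∈ compSet T j i := hlL.2 w hwl
      rcases compSet_cover_s13 hconn hadj' w with h | h
      · exact h
      · exact absurd (branch_eq hacyc hadj hadj' hwj h) hjj
  · intro j hj j' hj' hjj
    rw [Finset.disjoint_left]
    intro l h1 h2
    simp only [Lside, Finset.mem_filter] at h1 h2
    obtain ⟨w, w', -, hw, -⟩ := hcopies l h1.1
    exact hjj (branch_eq hacyc ((hN j).mp hj) ((hN j').mp hj') (h1.2 w hw) (h2.2 w hw))


end LCAux
end
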